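/- For every natural number j there exists a nonzero real constant c such that for all real x, Σ_{k=1}^{2^j} s_k · (x + k)^j = c, where s_k = (−1)^{ν(k−1)} and ν(m) denotes the number of ones in the binary expansion of m. That is, f_j^j is a nonzero constant polynomial. -/

import Mathlib

/-- Thue–Morse sign: `s k = (-1)^(number of ones in binary expansion of k-1)`. -/
def tmSign (k : ℕ) : ℝ := (-1 : ℝ) ^ ((Nat.digits 2 (k - 1)).sum)

/-- Digit-sum of `m + 2^n` is one more than that of `m`, for `m < 2^n`. -/
lemma digitSum_add_pow (n : ℕ) : ∀ m : ℕ, m < 2 ^ n →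
    (Nat.digits 2 (m + 2 ^ n)).sum = (Nat.digits 2 m).sum + 1 := by
  induction n with
  | zero =>
    intro m hm
    interval_cases m
    simp
  | succ n ih =>
    intro m hm
    have h1 : m + 2 ^ (n + 1) = m % 2 + 2 * (m / 2 + 2 ^ n) := by
      have := Nat.div_add_mod m 2
      ring_nf
      omega
    have hpos : 0 < m + 2 ^ (n + 1) := by positivity
    have hmod : (m + 2 ^ (n + 1)) % 2 = m % 2 := by omega
    have hdiv : (m + 2 ^ (n + 1)) / 2 = m / 2 + 2 ^ n := by omega
    rw [Nat.digits_def' (by norm_num) hpos, hmod, hdiv, List.sum_cons]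
    have hq : m / 2 < 2 ^ n := by
      have : 2 ^ (n + 1) = 2 * 2 ^ n := by ring
      omega
    have hsum : (Nat.digits 2 m).sum = m % 2 + (Nat.digits 2 (m / 2)).sum := by
      rcases Nat.eq_zero_or_pos m with h | h
      · simp [h]
      · rw [Nat.digits_def' (by norm_num) h]; simp
    rw [ih (m / 2) hq, hsum]
    omega

lemma tmSign_add_pow (n k : ℕ) (hk1 : 1 ≤ k) (hk2 : k ≤ 2 ^ n) :
    tmSign (k + 2 ^ n) = - tmSign k := by
  unfold tmSign
  have h1 : k + 2 ^ n - 1 = (k - 1) + 2 ^ n := by omega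
  rw [h1, digitSum_add_pow n (k - 1) (by omega), pow_succ]
  ring

/-- The partial signed power sum. -/
def T (n j : ℕ) (x : ℝ) : ℝ := ∑ k ∈ Finset.Icc 1 (2 ^ n), tmSign k * (x + k) ^ j

lemma T_succ (n j : ℕ) (x : ℝ) : T (n + 1) j x = T n j x - T n j (x + 2 ^ n) := by
  unfold T
  have hIcc : ∀ m : ℕ, Finset.Icc 1 m = Finset.Ioc 0 m := fun m =>
    Finset.Icc_add_one_left_eq_Ioc 0 m
  rw [hIcc,
    ← Finset.sum_Ioc_consecutive _ (Nat.zero_le (2 ^ n))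
      (Nat.pow_le_pow_right (by norm_num) (by omega))]
  have hIoc : Finset.Ioc (2 ^ n) (2 ^ (n + 1)) =
      Finset.map (addRightEmbedding (2 ^ n)) (Finset.Ioc 0 (2 ^ n)) := by
    rw [Finset.map_add_right_Ioc]
    congr 1
    · omega
    · rw [pow_succ]; ring
  rw [hIoc, Finset.sum_map]
  have hcong : ∀ k ∈ Finset.Ioc 0 (2 ^ n),
      tmSign (addRightEmbedding (2 ^ n) k) * (x + ↑(addRightEmbedding (2 ^ n) k)) ^ j
        = - (tmSign k * (x + 2 ^ n + k) ^ j) := by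
    intro k hk
    simp only [Finset.mem_Ioc] at hk
    simp only [addRightEmbedding_apply]
    rw [tmSign_add_pow n k (by omega) hk.2]
    push_cast
    ring
  rw [Finset.sum_congr rfl hcong, Finset.sum_neg_distrib, hIcc]
  ring

lemma claim (n : ℕ) : (∀ j < n, ∀ x : ℝ, T n j x = 0) ∧
    ∃ c : ℝ, c ≠ 0 ∧ ∀ x : ℝ, T n n x = c := by
  induction n with
  | zero =>
    refine ⟨by omega, 1, one_ne_zero, ?_⟩
    intro x
    simp [T, tmSign]
  | succ n ih =>
    obtain ⟨ih0, c, hc, hcc⟩ := ih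
    constructor
    · intro j hj x
      rw [T_succ]
      rcases Nat.lt_or_ge j n with h | h
      · rw [ih0 j h, ih0 j h, sub_self]
      · have hjn : j = n := by omega
        subst hjn
        rw [hcc, hcc, sub_self]
    · -- expand T n (n+1) (x + 2^n) by the binomial theorem
      have key : ∀ x : ℝ, T n (n + 1) (x + 2 ^ n) =
          ∑ i ∈ Finset.range (n + 2),
            T n i x * ((2 : ℝ) ^ n) ^ (n + 1 - i) * ((n + 1).choose i) := by
        intro x
        unfold T
        have hterm : ∀ k ∈ Finset.Icc 1 (2 ^ n),
            tmSign k * (x + 2 ^ n + (k : ℝ)) ^ (n + 1) =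
              ∑ i ∈ Finset.range (n + 2),
                (tmSign k * (x + k) ^ i) * ((2 : ℝ) ^ n) ^ (n + 1 - i)
                  * ((n + 1).choose i) := by
          intro k _
          rw [show x + 2 ^ n + (k : ℝ) = (x + k) + 2 ^ n by ring, add_pow,
            Finset.mul_sum]
          exact Finset.sum_congr rfl (fun i _ => by ring)
        rw [Finset.sum_congr rfl hterm, Finset.sum_comm]
        refine Finset.sum_congr rfl (fun i _ => ?_)
        rw [← Finset.sum_mul, ← Finset.sum_mul]
      refine ⟨-(c * 2 ^ n * (n + 1)), ?_, ?_⟩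
      · exact neg_ne_zero.mpr (mul_ne_zero (mul_ne_zero hc (by positivity))
          (by positivity))
      · intro x
        rw [T_succ, key x, Finset.sum_range_succ, Finset.sum_range_succ]
        have h1 : ∑ i ∈ Finset.range n,
            T n i x * ((2 : ℝ) ^ n) ^ (n + 1 - i) * ((n + 1).choose i) = 0 :=
          Finset.sum_eq_zero (fun i hi => by
            rw [ih0 i (Finset.mem_range.mp hi) x]; ring)
        rw [h1, hcc x, Nat.choose_succ_self_right, Nat.choose_self,
          show n + 1 - n = 1 by omega, show n + 1 - (n + 1) = 0 by omega]
        push_cast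
        ring

theorem stmt2 (j : ℕ) :
    ∃ c : ℝ, c ≠ 0 ∧ ∀ x : ℝ,
      ∑ k ∈ Finset.Icc 1 (2 ^ j), tmSign k * (x + k) ^ j = c := by
  exact (claim j).2
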